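/- For every q ∈ {1,...,m}, the mechanism J^{1,q} is truthful: for every profile u ∈ V^n, every voter i and every u_i' ∈ V, E[u_i(J^{1,q}(u_i,u_{-i}))] ≥ E[u_i(J^{1,q}(u_i',u_{-i}))]. -/

import Mathlib

open Finset

/-- A normalized preference function: maps into `[0,1]` and attains both `0` and `1`. -/
def IsPref {m : ℕ} (u : Fin m → ℝ) : Prop :=
  (∀ j, 0 ≤ u j ∧ u j ≤ 1) ∧ (∃ j, u j = 0) ∧ (∃ j, u j = 1)

/-- A tie-free normalized preference function. -/
def IsPrefU {m : ℕ} (u : Fin m → ℝ) : Prop :=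
  IsPref u ∧ Function.Injective u

/-- A profile of normalized preference functions. -/
def IsProfile {n m : ℕ} (u : Fin n → Fin m → ℝ) : Prop :=
  ∀ i, IsPref (u i)

/-- A tie-free profile. -/
def IsProfileU {n m : ℕ} (u : Fin n → Fin m → ℝ) : Prop :=
  ∀ i, IsPrefU (u i)

/-- `p` is a probability distribution over the `m` candidates. -/
def IsDist {m : ℕ} (p : Fin m → ℝ) : Prop :=
  (∀ j, 0 ≤ p j) ∧ ∑ j, p j = 1

/-- Social welfare of candidate `j` under profile `u`. -/
def Wel {n m : ℕ} (j : Fin m) (u : Fin n → Fin m → ℝ) : ℝ :=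
  ∑ i, u i j

/-- Range voting: the candidate of maximal social welfare, ties broken
toward the smaller index. -/
noncomputable def RV {n m : ℕ} (hm : 0 < m) (u : Fin n → Fin m → ℝ) : Fin m :=
  (Finset.univ.filter fun j => ∀ j', Wel j' u ≤ Wel j u).min' (by
    obtain ⟨j, -, hj⟩ := Finset.exists_max_image (Finset.univ : Finset (Fin m))
      (fun j => Wel j u) ⟨⟨0, hm⟩, Finset.mem_univ _⟩
    exact ⟨j, Finset.mem_filter.2 ⟨Finset.mem_univ _, fun j' => hj j' (Finset.mem_univ _)⟩⟩)

/-- Expected social welfare of a randomized mechanism `J` (given as the map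
sending a profile to the probability of each candidate winning). -/
noncomputable def expWel {n m : ℕ} (J : (Fin n → Fin m → ℝ) → Fin m → ℝ)
    (u : Fin n → Fin m → ℝ) : ℝ :=
  ∑ j, J u j * Wel j u

/-- Rank of candidate `j` in preference `v`, ties broken in favor of the
smaller candidate index (the most preferred candidate has rank 1). -/
noncomputable def rnk {m : ℕ} (v : Fin m → ℝ) (j : Fin m) : ℕ :=
  (Finset.univ.filter fun j' => v j < v j' ∨ (v j' = v j ∧ j' ≤ j)).card

/-- The mechanism `J^{1,q}`: pick a voter uniformly at random, then a winner
uniformly at random among that voter's `q` most preferred candidates. -/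
noncomputable def Jone (q : ℕ) {n m : ℕ} (u : Fin n → Fin m → ℝ) : Fin m → ℝ :=
  fun j => (∑ i : Fin n, if rnk (u i) j ≤ q then ((q : ℝ))⁻¹ else 0) / (n : ℝ)

/-- `⌊m^{1/3}⌋`. -/
noncomputable def mroot3 (m : ℕ) : ℕ := ⌊(m : ℝ) ^ ((1 : ℝ)/3)⌋₊

/-- The mechanism `J*`, running `J^{1,1}` and `J^{1,⌊m^{1/3}⌋}` each with
probability `1/2`. -/
noncomputable def Jstar {n m : ℕ} (u : Fin n → Fin m → ℝ) : Fin m → ℝ :=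
  fun j => (Jone 1 u j + Jone (mroot3 m) u j) / 2

/-- Voter with preference `v` prefers `j₀` to `j₁` (ties toward the smaller
candidate index). -/
def Prefers {m : ℕ} (v : Fin m → ℝ) (j₀ j₁ : Fin m) : Prop :=
  v j₁ < v j₀ ∨ (v j₀ = v j₁ ∧ j₀ < j₁)

noncomputable instance {m : ℕ} (v : Fin m → ℝ) (j₀ j₁ : Fin m) :
    Decidable (Prefers v j₀ j₁) := by unfold Prefers; infer_instance

/-- The mechanism `J^{2,q}`: pick two distinct candidates uniformly at random,
let each voter vote for the one it prefers; if one of the two gets at least `q`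
votes it wins, otherwise the winner is one of the two by a fair coin. -/
noncomputable def Jtwo (q : ℕ) {n m : ℕ} (u : Fin n → Fin m → ℝ) : Fin m → ℝ :=
  fun j =>
    (∑ j₀ : Fin m, ∑ j₁ : Fin m,
      if j₀ = j₁ then 0
      else
        if q ≤ (Finset.univ.filter fun i => Prefers (u i) j₀ j₁).card then
          (if j = j₀ then (1 : ℝ) else 0)
        else if q ≤ n - (Finset.univ.filter fun i => Prefers (u i) j₀ j₁).card then
          (if j = j₁ then (1 : ℝ) else 0)
        else ((if j = j₀ then (1 : ℝ)/2 else 0) + (if j = j₁ then (1 : ℝ)/2 else 0)))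
      / ((m * (m - 1) : ℕ) : ℝ)

/-- `J` assigns a probability distribution to every tie-free profile. -/
def MechU {n m : ℕ} (J : (Fin n → Fin m → ℝ) → Fin m → ℝ) : Prop :=
  ∀ u, IsProfileU u → IsDist (J u)

/-- Truthfulness (on tie-free profiles). -/
def Truthful {n m : ℕ} (J : (Fin n → Fin m → ℝ) → Fin m → ℝ) : Prop :=
  ∀ u, IsProfileU u → ∀ (i : Fin n) (v : Fin m → ℝ), IsPrefU v →
    ∑ j, J (Function.update u i v) j * u i j ≤ ∑ j, J u j * u i j

/-- Ordinality (on tie-free profiles). -/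
def OrdinalMech {n m : ℕ} (J : (Fin n → Fin m → ℝ) → Fin m → ℝ) : Prop :=
  ∀ u u' : Fin n → Fin m → ℝ, IsProfileU u → IsProfileU u' →
    (∀ i (j j' : Fin m), u i j < u i j' ↔ u' i j < u' i j') → J u = J u'

/-- Unilateral mechanism (on tie-free profiles): depends only on one voter. -/
def Unilateral {n m : ℕ} (J : (Fin n → Fin m → ℝ) → Fin m → ℝ) : Prop :=
  ∃ i : Fin n, ∀ u u' : Fin n → Fin m → ℝ, IsProfileU u → IsProfileU u' →
    u i = u' i → J u = J u'

/-- Duple mechanism (on tie-free profiles): supported on two fixed candidates. -/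
def Duple {n m : ℕ} (J : (Fin n → Fin m → ℝ) → Fin m → ℝ) : Prop :=
  ∃ j₀ j₁ : Fin m, j₀ ≠ j₁ ∧ ∀ u, IsProfileU u → ∀ j, j ≠ j₀ → j ≠ j₁ → J u j = 0

/-- Neutral mechanism (on tie-free profiles). -/
def Neutral {n m : ℕ} (J : (Fin n → Fin m → ℝ) → Fin m → ℝ) : Prop :=
  ∀ τ : Equiv.Perm (Fin m), ∀ u : Fin n → Fin m → ℝ, IsProfileU u →
    ∀ j, J (fun i => u i ∘ τ) j = J u (τ j)

/-- Anonymous mechanism (on tie-free profiles). -/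
def AnonymousMech {n m : ℕ} (J : (Fin n → Fin m → ℝ) → Fin m → ℝ) : Prop :=
  ∀ σ : Equiv.Perm (Fin n), ∀ u : Fin n → Fin m → ℝ, IsProfileU u →
    J (fun i => u (σ i)) = J u

/-- `ratio_U(J)`: infimum of the welfare ratio over tie-free profiles. -/
noncomputable def ratioU {n m : ℕ} (hm : 0 < m)
    (J : (Fin n → Fin m → ℝ) → Fin m → ℝ) : ℝ :=
  sInf {r | ∃ u, IsProfileU u ∧ r = expWel J u / Wel (RV hm u) u}

/-- `R_k`: tie-free normalized preferences taking values in `{0,1/k,…,1}`. -/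
def Rk {m : ℕ} (k : ℕ) (u : Fin m → ℝ) : Prop :=
  IsPrefU u ∧ ∀ j, ∃ t : ℕ, t ≤ k ∧ u j = (t : ℝ) / k

/-- `a(u)`: the number of `t ∈ {0,…,k-1}` such that exactly one of `t/k` and
`(t+1)/k` lies in the image of `u`. -/
noncomputable def aOf {m : ℕ} (k : ℕ) (u : Fin m → ℝ) : ℕ :=
  ((Finset.range k).filter fun t : ℕ =>
    ((∃ j : Fin m, u j = (t : ℝ) / k) ∧ ¬ (∃ j : Fin m, u j = ((t : ℝ) + 1) / k)) ∨
    ((∃ j : Fin m, u j = ((t : ℝ) + 1) / k) ∧ ¬ (∃ j : Fin m, u j = (t : ℝ) / k))).card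

/-- `C_k = {u ∈ R_k : a(u) = 2}`. -/
def Ck {m : ℕ} (k : ℕ) (u : Fin m → ℝ) : Prop :=
  Rk k u ∧ aOf k u = 2

/-- `count(u)`: the number of candidates with `u`-value above `1/2`. -/
noncomputable def countOf {m : ℕ} (u : Fin m → ℝ) : ℕ :=
  (Finset.univ.filter fun j => (1 : ℝ)/2 < u j).card

/-- `rank(u,j) = #{j' : u(j') ≥ u(j)}`. -/
noncomputable def rankOf {m : ℕ} (u : Fin m → ℝ) (j : Fin m) : ℕ :=
  (Finset.univ.filter fun j' => u j ≤ u j').card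

/-- `D_k = D_k^{(a)} ∪ D_k^{(b)} ∪ D_k^{(c)}` (`⟨0,hm⟩` is the first candidate). -/
def Dk {m : ℕ} (hm : 0 < m) (k : ℕ) (u : Fin m → ℝ) : Prop :=
  Ck k u ∧
    ((countOf u ≤ 2 ∧ (1 : ℝ)/2 < u ⟨0, hm⟩) ∨
     (countOf u = 1 ∧ mroot3 m < rankOf u ⟨0, hm⟩) ∨
     (countOf u = mroot3 m + 1 ∧ rankOf u ⟨0, hm⟩ = mroot3 m + 1))

/-- `g(u) = E[Wel(J*(u),u)] / Wel(1,u)` where `1` is the first candidate. -/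
noncomputable def gfun {n m : ℕ} (hm : 0 < m) (u : Fin n → Fin m → ℝ) : ℝ :=
  expWel Jstar u / Wel ⟨0, hm⟩ u

/-- The minimum (as an infimum) of `f` over profiles all of whose preference
functions satisfy `P`. -/
noncomputable def minOver {n m : ℕ} (P : (Fin m → ℝ) → Prop)
    (f : (Fin n → Fin m → ℝ) → ℝ) : ℝ :=
  sInf {r | ∃ u : Fin n → Fin m → ℝ, (∀ i, P (u i)) ∧ r = f u}

lemma rnk_lt_of_lt {m : ℕ} (w : Fin m → ℝ) {j j' : Fin m} (h : w j < w j') :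
    rnk w j' < rnk w j := by
  unfold rnk
  apply Finset.card_lt_card
  constructor
  · intro x hx
    simp only [mem_filter, mem_univ, true_and] at hx ⊢
    rcases hx with h1 | ⟨h1, h2⟩
    · left; exact h.trans h1
    · left; rwa [h1]
  · intro hsub
    have hj : j ∈ univ.filter fun j'' => w j < w j'' ∨ (w j'' = w j ∧ j'' ≤ j) := by
      simp
    have := hsub hj
    simp only [mem_filter, mem_univ, true_and] at this
    rcases this with h1 | ⟨h1, _⟩
    · exact absurd h (not_lt.2 h1.le)
    · exact absurd h (by rw [h1]; exact lt_irrefl _)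

lemma rnk_lt_of_eq {m : ℕ} (w : Fin m → ℝ) {j j' : Fin m} (he : w j = w j')
    (h : j < j') : rnk w j < rnk w j' := by
  unfold rnk
  apply Finset.card_lt_card
  constructor
  · intro x hx
    simp only [mem_filter, mem_univ, true_and] at hx ⊢
    rcases hx with h1 | ⟨h1, h2⟩
    · left; rwa [← he]
    · right; exact ⟨h1.trans he, h2.trans h.le⟩
  · intro hsub
    have hj : j' ∈ univ.filter fun x => w j' < w x ∨ (w x = w j' ∧ x ≤ j') := by
      simp
    have := hsub hj
    simp only [mem_filter, mem_univ, true_and] at this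
    rcases this with h1 | ⟨_, h2⟩
    · rw [he] at h1; exact absurd h1 (lt_irrefl _)
    · exact absurd h (not_lt.2 h2)

lemma rnk_injective {m : ℕ} (w : Fin m → ℝ) : Function.Injective (rnk w) := by
  intro j j' h
  by_contra hne
  rcases lt_trichotomy (w j) (w j') with h1 | h1 | h1
  · exact absurd h (rnk_lt_of_lt w h1).ne'
  · rcases lt_or_gt_of_ne (show j ≠ j' from hne) with h2 | h2
    · exact absurd h (rnk_lt_of_eq w h1 h2).ne
    · exact absurd h (rnk_lt_of_eq w h1.symm h2).ne'
  · exact absurd h (rnk_lt_of_lt w h1).ne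

lemma rnk_mem_Icc {m : ℕ} (w : Fin m → ℝ) (j : Fin m) :
    rnk w j ∈ Finset.Icc 1 m := by
  rw [Finset.mem_Icc]
  constructor
  · have : j ∈ univ.filter fun j'' => w j < w j'' ∨ (w j'' = w j ∧ j'' ≤ j) := by simp
    exact Finset.card_pos.2 ⟨j, this⟩
  · calc rnk w j ≤ (univ : Finset (Fin m)).card := Finset.card_filter_le _ _
    _ = m := Finset.card_fin m

lemma rnk_image {m : ℕ} (w : Fin m → ℝ) :
    Finset.image (rnk w) univ = Finset.Icc 1 m := by
  apply Finset.eq_of_subset_of_card_le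
  · intro x hx
    simp only [Finset.mem_image] at hx
    obtain ⟨j, -, rfl⟩ := hx
    exact rnk_mem_Icc w j
  · rw [Finset.card_image_of_injective _ (rnk_injective w)]
    simp

lemma card_rnk_le {m q : ℕ} (hqm : q ≤ m) (w : Fin m → ℝ) :
    (univ.filter fun j => rnk w j ≤ q).card = q := by
  have h1 : Finset.image (rnk w) (univ.filter fun j => rnk w j ≤ q)
      = (Finset.Icc 1 m).filter (· ≤ q) := by
    rw [← rnk_image w, Finset.filter_image]
  have h2 : (Finset.Icc 1 m).filter (· ≤ q) = Finset.Icc 1 q := by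
    ext x
    simp only [Finset.mem_filter, Finset.mem_Icc]
    constructor
    · rintro ⟨⟨a, -⟩, b⟩; exact ⟨a, b⟩
    · rintro ⟨a, b⟩; exact ⟨⟨a, b.trans hqm⟩, b⟩
  rw [← Finset.card_image_of_injective _ (rnk_injective w), h1, h2]
  simp

/-- Sum of `f` over the top-`q` set of any `w` is at most its sum over its
own top-`q` set. -/
lemma sum_top_le {m q : ℕ} (hqm : q ≤ m) (f w : Fin m → ℝ) :
    ∑ j ∈ univ.filter (fun j => rnk w j ≤ q), f j ≤
      ∑ j ∈ univ.filter (fun j => rnk f j ≤ q), f j := by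
  set T := univ.filter (fun j => rnk w j ≤ q) with hT
  set S := univ.filter (fun j => rnk f j ≤ q) with hS
  have hcard : T.card = S.card := by rw [card_rnk_le hqm, card_rnk_le hqm]
  have hsd : (T \ S).card = (S \ T).card := Finset.card_sdiff_comm hcard
  have hTsplit : ∑ j ∈ T, f j = ∑ j ∈ T \ S, f j + ∑ j ∈ T ∩ S, f j := by
    rw [← Finset.sum_sdiff Finset.inter_subset_left,
      Finset.sdiff_inter_self_left]
  have hSsplit : ∑ j ∈ S, f j = ∑ j ∈ S \ T, f j + ∑ j ∈ S ∩ T, f j := by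
    rw [← Finset.sum_sdiff Finset.inter_subset_left,
      Finset.sdiff_inter_self_left]
  rw [hTsplit, hSsplit, Finset.inter_comm]
  apply add_le_add_left
  rcases Finset.eq_empty_or_nonempty (S \ T) with he | hne
  · have : (T \ S) = ∅ := Finset.card_eq_zero.1 (by rw [hsd, he]; simp)
    rw [this, he]
  · obtain ⟨a₀, ha₀, hmin⟩ := Finset.exists_min_image (S \ T) f hne
    have ha₀S : rnk f a₀ ≤ q := by
      have := (Finset.mem_sdiff.1 ha₀).1
      simp only [hS, mem_filter] at this; exact this.2
    have key : ∀ b ∈ T \ S, f b ≤ f a₀ := by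
      intro b hb
      have hbS : ¬ rnk f b ≤ q := by
        have := (Finset.mem_sdiff.1 hb).2
        simp only [hS, mem_filter, mem_univ, true_and] at this; exact this
      by_contra hlt
      push_neg at hlt
      exact hbS ((rnk_lt_of_lt f hlt).le.trans ha₀S)
    calc ∑ j ∈ T \ S, f j ≤ ∑ _j ∈ T \ S, f a₀ := Finset.sum_le_sum key
    _ = (T \ S).card • f a₀ := by rw [Finset.sum_const]
    _ = (S \ T).card • f a₀ := by rw [hsd]
    _ = ∑ _j ∈ S \ T, f a₀ := by rw [Finset.sum_const]
    _ ≤ ∑ j ∈ S \ T, f j := Finset.sum_le_sum (by intro b hb; exact hmin b hb)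

/-- for every `q ∈ {1,…,m}`, the mechanism `J^{1,q}` is
truthful on all normalized profiles. -/
theorem stmt14 (n m : ℕ) (hn : 1 ≤ n) (hm : 2 ≤ m)
    (q : ℕ) (hq1 : 1 ≤ q) (hqm : q ≤ m)
    (u : Fin n → Fin m → ℝ) (hu : IsProfile u) (i : Fin n)
    (v : Fin m → ℝ) (hv : IsPref v) :
    ∑ j, Jone q (Function.update u i v) j * u i j ≤ ∑ j, Jone q u j * u i j := by
  have expand : ∀ w : Fin n → Fin m → ℝ,
      ∑ j, Jone q w j * u i j =
        (∑ i' : Fin n, ∑ j,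
          (if rnk (w i') j ≤ q then ((q : ℝ))⁻¹ else 0) * u i j) / (n : ℝ) := by
    intro w
    unfold Jone
    simp only [div_mul_eq_mul_div]
    rw [← Finset.sum_div]
    congr 1
    conv_rhs => rw [Finset.sum_comm]
    apply Finset.sum_congr rfl
    intro j _
    rw [Finset.sum_mul]
  rw [expand, expand]
  rw [div_eq_mul_inv, div_eq_mul_inv]
  apply mul_le_mul_of_nonneg_right ?_ (by positivity)
  apply Finset.sum_le_sum
  intro i' _
  have step : ∀ w : Fin m → ℝ,
      ∑ j, (if rnk w j ≤ q then ((q : ℝ))⁻¹ else 0) * u i j =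
        (q : ℝ)⁻¹ * ∑ j ∈ univ.filter (fun j => rnk w j ≤ q), u i j := by
    intro w
    rw [Finset.mul_sum, Finset.sum_filter]
    apply Finset.sum_congr rfl
    intro j _
    split <;> simp
  by_cases hii : i' = i
  · subst hii
    rw [Function.update_self, step, step]
    apply mul_le_mul_of_nonneg_left (sum_top_le hqm _ _) (by positivity)
  · rw [Function.update_of_ne hii]
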